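/- arXiv:1210.3194 — 3 statements merged into one kernel-verified Lean document; each statement's English description precedes it below -/
import Mathlib

section
/- Let d ≥ 1 be an integer, let B ⊂ ℝ^d be a bounded Lebesgue-measurable set, let k > 0, and let T : L²(B;ℂ) → L²(B;ℂ) be a bounded linear operator. Define H : ℂ^d × ℂ^d → ℂ by H(z,w) = ∫_B exp(−i k z·y) · (T(y' ↦ exp(i k w·y')))(y) dy, where z·y = Σ_{l=1}^d z_l y_l. Then H is holomorphic separately in each of the 2d complex coordinates z₁,…,z_d, w₁,…,w_d: for each coordinate and each fixed choice of all the other coordinates, H is ℂ-differentiable as a function of that coordinate on ℂ. -/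
open MeasureTheory Bornology Complex Metric Finset

lemma coord_le_norm' {d : ℕ} (y : EuclideanSpace ℝ (Fin d)) (j : Fin d) :
    |y j| ≤ ‖y‖ := by
  rw [EuclideanSpace.norm_eq]
  calc |y j| = Real.sqrt (‖y j‖ ^ 2) := by
        rw [Real.sqrt_sq_eq_abs]; simp [Real.norm_eq_abs, abs_abs]
    _ ≤ _ := by
        apply Real.sqrt_le_sqrt
        exact Finset.single_le_sum (fun i _ => sq_nonneg ‖y i‖) (Finset.mem_univ j)

lemma aux' {d : ℕ} {μ : Measure (EuclideanSpace ℝ (Fin d))} {R : ℝ}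
    (hR : ∀ᵐ y ∂μ, ‖y‖ ≤ R)
    (c : ℂ) (g : EuclideanSpace ℝ (Fin d) → ℂ) (hg : Integrable g μ)
    (v : Fin d → ℂ) (j : Fin d) :
    Differentiable ℂ (fun t : ℂ =>
      ∫ y, Complex.exp (c * ∑ l, (Function.update v j t) l * (y l : ℂ)) * g y ∂μ) := by
  intro t₀
  set A : EuclideanSpace ℝ (Fin d) → ℂ := fun y => ∑ l ∈ Finset.univ \ {j}, v l * (y l : ℂ)
    with hAdef
  have hsum : ∀ (t : ℂ) (y : EuclideanSpace ℝ (Fin d)),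
      (∑ l, (Function.update v j t) l * (y l : ℂ)) = t * (y j : ℂ) + A y := by
    intro t y
    have h1 : (fun l => (Function.update v j t) l * (y l : ℂ))
        = Function.update (fun l => v l * (y l : ℂ)) j (t * (y j : ℂ)) := by
      funext l
      rcases eq_or_ne l j with rfl | h
      · simp
      · simp [Function.update_of_ne h]
    rw [h1, Finset.sum_update_of_mem (Finset.mem_univ j)]
  have hycont : ∀ l : Fin d, Continuous fun y : EuclideanSpace ℝ (Fin d) => ((y l : ℝ) : ℂ) :=
    fun l => Complex.continuous_ofReal.comp
      ((PiLp.proj (𝕜 := ℝ) 2 (fun _ : Fin d => ℝ) l).continuous)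
  have hAc : Continuous A := by
    apply continuous_finset_sum
    exact fun l _ => continuous_const.mul (hycont l)
  set M : ℝ := (∑ l, ‖v l‖) * |R| with hM
  have hAbd : ∀ y : EuclideanSpace ℝ (Fin d), ‖y‖ ≤ R → ‖A y‖ ≤ M := by
    intro y hy
    calc ‖A y‖ ≤ ∑ l ∈ Finset.univ \ {j}, ‖v l * (y l : ℂ)‖ := norm_sum_le _ _
      _ ≤ ∑ l ∈ Finset.univ \ {j}, ‖v l‖ * |R| := by
          apply Finset.sum_le_sum
          intro l _
          rw [norm_mul, Complex.norm_real, Real.norm_eq_abs]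
          exact mul_le_mul_of_nonneg_left
            (((coord_le_norm' y l).trans hy).trans (le_abs_self R)) (norm_nonneg _)
      _ ≤ ∑ l, ‖v l‖ * |R| := Finset.sum_le_sum_of_subset_of_nonneg
            (Finset.subset_univ _)
            (fun l _ _ => mul_nonneg (norm_nonneg _) (abs_nonneg _))
      _ = M := by rw [hM, Finset.sum_mul]
  simp only [hsum]
  set bound : EuclideanSpace ℝ (Fin d) → ℝ :=
    fun y => (‖c‖ * |R| * Real.exp (‖c‖ * ((‖t₀‖ + 1) * |R| + M))) * ‖g y‖ with hbd
  have hre : ∀ (t : ℂ) (y : EuclideanSpace ℝ (Fin d)), ‖t‖ ≤ ‖t₀‖ + 1 → ‖y‖ ≤ R →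
      (c * (t * (y j : ℂ) + A y)).re ≤ ‖c‖ * ((‖t₀‖ + 1) * |R| + M) := by
    intro t y ht hy
    have h1 : |(y j : ℝ)| ≤ |R| := ((coord_le_norm' y j).trans hy).trans (le_abs_self R)
    calc (c * (t * (y j : ℂ) + A y)).re ≤ ‖c * (t * (y j : ℂ) + A y)‖ := Complex.re_le_norm _
      _ ≤ ‖c‖ * (‖t‖ * |(y j : ℝ)| + ‖A y‖) := by
          rw [norm_mul]
          refine mul_le_mul_of_nonneg_left ?_ (norm_nonneg c)
          exact (norm_add_le _ _).trans
            (by rw [norm_mul, Complex.norm_real, Real.norm_eq_abs])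
      _ ≤ ‖c‖ * ((‖t₀‖ + 1) * |R| + M) := by
          refine mul_le_mul_of_nonneg_left (add_le_add ?_ (hAbd y hy)) (norm_nonneg c)
          exact mul_le_mul ht h1 (abs_nonneg _) (by positivity)
  have key := hasDerivAt_integral_of_dominated_loc_of_deriv_le (μ := μ)
    (F := fun t y => Complex.exp (c * (t * (y j : ℂ) + A y)) * g y)
    (F' := fun t y => (c * (y j : ℂ)) * (Complex.exp (c * (t * (y j : ℂ) + A y)) * g y))
    (x₀ := t₀) (bound := bound) (s := Metric.ball t₀ 1) (Metric.ball_mem_nhds t₀ one_pos)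
    ?_ ?_ ?_ ?_ ?_ ?_
  · exact key.2.differentiableAt
  · filter_upwards with t
    exact ((Continuous.cexp (by fun_prop)).aestronglyMeasurable).mul hg.1
  · apply hg.bdd_mul ((Continuous.cexp (by fun_prop)).aestronglyMeasurable)
      (c := Real.exp (‖c‖ * ((‖t₀‖ + 1) * |R| + M)))
    filter_upwards [hR] with y hy
    rw [Complex.norm_exp]
    exact Real.exp_le_exp.2 (hre t₀ y (by linarith) hy)
  · exact ((continuous_const.mul (hycont j)).aestronglyMeasurable).mul
      (((Continuous.cexp (by fun_prop)).aestronglyMeasurable).mul hg.1)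
  · filter_upwards [hR] with y hy t ht
    have h1 : |(y j : ℝ)| ≤ |R| := ((coord_le_norm' y j).trans hy).trans (le_abs_self R)
    have ht' : ‖t‖ ≤ ‖t₀‖ + 1 := by
      have h := mem_ball_iff_norm.mp ht
      calc ‖t‖ ≤ ‖t₀‖ + ‖t - t₀‖ := by simpa using norm_add_le t₀ (t - t₀)
        _ ≤ ‖t₀‖ + 1 := by linarith
    calc ‖c * (y j : ℂ) * (Complex.exp (c * (t * (y j : ℂ) + A y)) * g y)‖
        = (‖c‖ * |(y j : ℝ)|) * (Real.exp ((c * (t * (y j : ℂ) + A y)).re) * ‖g y‖) := by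
          simp [norm_mul, Complex.norm_real, Real.norm_eq_abs, Complex.norm_exp, mul_assoc]
      _ ≤ (‖c‖ * |R|) * (Real.exp (‖c‖ * ((‖t₀‖ + 1) * |R| + M)) * ‖g y‖) := by
          refine mul_le_mul (mul_le_mul_of_nonneg_left h1 (norm_nonneg c))
            (mul_le_mul_of_nonneg_right (Real.exp_le_exp.2 (hre t y ht' hy)) (norm_nonneg _))
            (by positivity) (by positivity)
      _ = bound y := by rw [hbd]; ring
  · exact hg.norm.const_mul _
  · filter_upwards with y t _
    have h : HasDerivAt (fun t : ℂ => Complex.exp (c * (t * (y j : ℂ) + A y)))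
        (Complex.exp (c * (t * (y j : ℂ) + A y)) * (c * (1 * (y j : ℂ)))) t :=
      ((((hasDerivAt_id t).mul_const ((y j : ℝ) : ℂ)).add_const (A y)).const_mul c).cexp
    have h2 := h.mul_const (g y)
    exact h2.congr_deriv (by ring)

set_option maxHeartbeats 2000000 in
/-- Let `B ⊂ ℝ^d` be bounded measurable, `k > 0`, and
`T : L²(B;ℂ) → L²(B;ℂ)` a bounded linear operator. Then
`H(z,w) = ∫_B exp(−ik z·y) (T(exp(ik w··)))(y) dy` is holomorphic separately in each of
the `2d` complex coordinates `z₁,…,z_d,w₁,…,w_d`. -/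
theorem stmt10 (d : ℕ) (hd : 1 ≤ d)
    (B : Set (EuclideanSpace ℝ (Fin d))) (hBmeas : MeasurableSet B)
    (hBbdd : Bornology.IsBounded B)
    (k : ℝ) (hk : 0 < k)
    (T : Lp ℂ 2 ((volume : Measure (EuclideanSpace ℝ (Fin d))).restrict B)
      →L[ℂ] Lp ℂ 2 ((volume : Measure (EuclideanSpace ℝ (Fin d))).restrict B))
    (E : (Fin d → ℂ) → Lp ℂ 2 ((volume : Measure (EuclideanSpace ℝ (Fin d))).restrict B))
    (hE : ∀ w : Fin d → ℂ, (E w : EuclideanSpace ℝ (Fin d) → ℂ)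
      =ᵐ[(volume : Measure (EuclideanSpace ℝ (Fin d))).restrict B]
      fun y => Complex.exp (Complex.I * k * ∑ l, w l * (y l : ℂ)))
    (H : (Fin d → ℂ) → (Fin d → ℂ) → ℂ)
    (hH : ∀ z w : Fin d → ℂ, H z w =
      ∫ y : EuclideanSpace ℝ (Fin d),
        Complex.exp (-(Complex.I * k * ∑ l, z l * (y l : ℂ))) * (T (E w)) y
        ∂((volume : Measure (EuclideanSpace ℝ (Fin d))).restrict B)) :
    ∀ z w : Fin d → ℂ, ∀ j : Fin d,
      Differentiable ℂ (fun t : ℂ => H (Function.update z j t) w) ∧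
      Differentiable ℂ (fun t : ℂ => H z (Function.update w j t)) := by
  intro z w j
  haveI : IsFiniteMeasure ((volume : Measure (EuclideanSpace ℝ (Fin d))).restrict B) := by
    constructor
    rw [Measure.restrict_apply_univ]
    exact hBbdd.measure_lt_top
  obtain ⟨R, hR0⟩ := isBounded_iff_forall_norm_le.mp hBbdd
  have hRae : ∀ᵐ y ∂((volume : Measure (EuclideanSpace ℝ (Fin d))).restrict B), ‖y‖ ≤ R := by
    filter_upwards [ae_restrict_mem hBmeas] with y hy using hR0 y hy
  constructor
  · -- z-coordinate
    have hg : Integrable (fun y => (T (E w)) y)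
        ((volume : Measure (EuclideanSpace ℝ (Fin d))).restrict B) :=
      (Lp.memLp (T (E w))).integrable one_le_two
    have heq : (fun t : ℂ => H (Function.update z j t) w)
        = fun t : ℂ => ∫ y, Complex.exp ((-(Complex.I * k))
            * ∑ l, (Function.update z j t) l * (y l : ℂ)) * (T (E w)) y
            ∂((volume : Measure (EuclideanSpace ℝ (Fin d))).restrict B) := by
      funext t
      rw [hH]
      refine integral_congr_ae (Filter.Eventually.of_forall fun y => ?_)
      simp only [neg_mul]
    rw [heq]
    exact aux' hRae (-(Complex.I * k)) _ hg z j
  · -- w-coordinate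
    set f : EuclideanSpace ℝ (Fin d) → ℂ :=
      fun y => Complex.exp (-(Complex.I * k * ∑ l, z l * (y l : ℂ))) with hf
    set fc : EuclideanSpace ℝ (Fin d) → ℂ := fun y => (starRingEnd ℂ) (f y) with hfc
    have hycont : ∀ l : Fin d, Continuous fun y : EuclideanSpace ℝ (Fin d) => ((y l : ℝ) : ℂ) :=
      fun l => Complex.continuous_ofReal.comp
        ((PiLp.proj (𝕜 := ℝ) 2 (fun _ : Fin d => ℝ) l).continuous)
    have hfccont : Continuous fc := by
      apply Complex.continuous_conj.comp
      exact Continuous.cexp (by fun_prop)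
    have hmem : MemLp fc 2 ((volume : Measure (EuclideanSpace ℝ (Fin d))).restrict B) := by
      apply MemLp.of_bound hfccont.aestronglyMeasurable
        (Real.exp (k * (∑ l, ‖z l‖) * |R|))
      filter_upwards [hRae] with y hy
      simp only [hfc, hf]
      rw [Complex.norm_conj, Complex.norm_exp]
      apply Real.exp_le_exp.2
      calc (-(Complex.I * k * ∑ l, z l * (y l : ℂ))).re
          ≤ ‖-(Complex.I * k * ∑ l, z l * (y l : ℂ))‖ := Complex.re_le_norm _
        _ = ‖Complex.I‖ * ‖(k : ℂ)‖ * ‖∑ l, z l * (y l : ℂ)‖ := by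
            rw [norm_neg, norm_mul, norm_mul]
        _ ≤ 1 * k * ((∑ l, ‖z l‖) * |R|) := by
            gcongr
            · simp
            · rw [Complex.norm_real, Real.norm_eq_abs, abs_of_pos hk]
            · calc ‖∑ l, z l * (y l : ℂ)‖ ≤ ∑ l, ‖z l * (y l : ℂ)‖ := norm_sum_le _ _
                _ ≤ ∑ l, ‖z l‖ * |R| := by
                    apply Finset.sum_le_sum
                    intro l _
                    rw [norm_mul, Complex.norm_real, Real.norm_eq_abs]
                    exact mul_le_mul_of_nonneg_left
                      (((coord_le_norm' y l).trans hy).trans (le_abs_self R)) (norm_nonneg _)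
                _ = (∑ l, ‖z l‖) * |R| := by rw [Finset.sum_mul]
        _ = k * (∑ l, ‖z l‖) * |R| := by ring
    set F' := hmem.toLp fc with hF'
    set h := ContinuousLinearMap.adjoint T F' with hh
    have hint : Integrable (fun y => h y)
        ((volume : Measure (EuclideanSpace ℝ (Fin d))).restrict B) :=
      (Lp.memLp h).integrable one_le_two
    have hconjint : Integrable (fun y => (starRingEnd ℂ) (h y))
        ((volume : Measure (EuclideanSpace ℝ (Fin d))).restrict B) := by
      refine hint.norm.mono' (Complex.continuous_conj.comp_aestronglyMeasurable
        (Lp.aestronglyMeasurable h)) ?_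
      filter_upwards with y
      simp
    have claim : ∀ w' : Fin d → ℂ, H z w' =
        ∫ y, Complex.exp ((Complex.I * k) * ∑ l, w' l * (y l : ℂ))
          * (starRingEnd ℂ) (h y)
          ∂((volume : Measure (EuclideanSpace ℝ (Fin d))).restrict B) := by
      intro w'
      have step1 : H z w' = (inner ℂ F' (T (E w')) : ℂ) := by
        rw [hH, L2.inner_def]
        refine integral_congr_ae ?_
        have hcoe := hmem.coeFn_toLp
        rw [← hF'] at hcoe
        filter_upwards [hcoe] with y hy
        rw [RCLike.inner_apply', hy]
        simp only [hfc, hf, Complex.conj_conj]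
      have step2 : (inner ℂ F' (T (E w')) : ℂ) = (inner ℂ h (E w') : ℂ) :=
        (ContinuousLinearMap.adjoint_inner_left T (E w') F').symm
      have step3 : (inner ℂ h (E w') : ℂ)
          = ∫ y, Complex.exp ((Complex.I * k) * ∑ l, w' l * (y l : ℂ))
              * (starRingEnd ℂ) (h y)
              ∂((volume : Measure (EuclideanSpace ℝ (Fin d))).restrict B) := by
        rw [L2.inner_def]
        refine integral_congr_ae ?_
        filter_upwards [hE w'] with y hy
        rw [RCLike.inner_apply', hy]
        exact mul_comm _ _
      rw [step1, step2, step3]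
    have heq : (fun t : ℂ => H z (Function.update w j t))
        = fun t : ℂ => ∫ y, Complex.exp ((Complex.I * k)
            * ∑ l, (Function.update w j t) l * (y l : ℂ)) * (starRingEnd ℂ) (h y)
            ∂((volume : Measure (EuclideanSpace ℝ (Fin d))).restrict B) := by
      funext t
      exact claim _
    rw [heq]
    exact aux' hRae (Complex.I * k) _ hconjint w j
end

section
/- Let d ≥ 1 be an integer, let B ⊂ ℝ^d be a bounded Lebesgue-measurable set, let k > 0, and let T : L²(B;ℂ) → L²(B;ℂ) be a bounded linear operator. Then the function H : ℂ^d × ℂ^d → ℂ defined by H(z,w) = ∫_B exp(−i k z·y) · (T(y' ↦ exp(i k w·y')))(y) dy, where z·y = Σ_{l=1}^d z_l y_l, is jointly holomorphic (ℂ-analytic) on ℂ^d × ℂ^d ≅ ℂ^{2d}. -/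
open MeasureTheory Bornology

section ConjPair

variable {α : Type*} [MeasurableSpace α]

noncomputable def conjL2 (μ : Measure α) (f : Lp ℂ 2 μ) : Lp ℂ 2 μ :=
  MemLp.toLp (fun x => star (f x))
    ((Lp.memLp f).of_le
      (continuous_star.comp_aestronglyMeasurable (Lp.aestronglyMeasurable f))
      (Filter.Eventually.of_forall fun x => by simp))

lemma conjL2_coeFn (μ : Measure α) (f : Lp ℂ 2 μ) :
    conjL2 μ f =ᵐ[μ] fun x => star (f x) := MemLp.coeFn_toLp _

lemma conjL2_add (μ : Measure α) (f g : Lp ℂ 2 μ) :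
    conjL2 μ (f + g) = conjL2 μ f + conjL2 μ g := by
  apply Lp.ext
  filter_upwards [conjL2_coeFn μ (f + g), conjL2_coeFn μ f, conjL2_coeFn μ g,
    Lp.coeFn_add f g, Lp.coeFn_add (conjL2 μ f) (conjL2 μ g)] with x h1 h2 h3 h4 h5
  rw [h1, h4, h5, Pi.add_apply, Pi.add_apply, h2, h3, star_add]

lemma conjL2_smul (μ : Measure α) (c : ℂ) (f : Lp ℂ 2 μ) :
    conjL2 μ (c • f) = (starRingEnd ℂ c) • conjL2 μ f := by
  apply Lp.ext
  filter_upwards [conjL2_coeFn μ (c • f), conjL2_coeFn μ f, Lp.coeFn_smul c f,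
    Lp.coeFn_smul (starRingEnd ℂ c) (conjL2 μ f)] with x h1 h2 h3 h4
  rw [h1, h3, h4, Pi.smul_apply, Pi.smul_apply, h2, smul_eq_mul, smul_eq_mul, star_mul',
    starRingEnd_apply]

lemma norm_conjL2 (μ : Measure α) (f : Lp ℂ 2 μ) : ‖conjL2 μ f‖ = ‖f‖ := by
  rw [conjL2, Lp.norm_toLp, Lp.norm_def]
  congr 1
  exact eLpNorm_congr_norm_ae (Filter.Eventually.of_forall fun x => by simp)

noncomputable def pairL2 (μ : Measure α) : Lp ℂ 2 μ →L[ℂ] Lp ℂ 2 μ →L[ℂ] ℂ :=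
  LinearMap.mkContinuous₂
    (LinearMap.mk₂ ℂ (fun f g => inner (𝕜 := ℂ) (conjL2 μ f) g)
      (fun f f' g => by
        show inner (𝕜 := ℂ) (conjL2 μ (f + f')) g = _
        rw [conjL2_add, inner_add_left])
      (fun c f g => by
        show inner (𝕜 := ℂ) (conjL2 μ (c • f)) g = c • inner (𝕜 := ℂ) (conjL2 μ f) g
        rw [conjL2_smul, inner_smul_left, starRingEnd_self_apply, smul_eq_mul])
      (fun f g g' => inner_add_right _ _ _)
      (fun c f g => inner_smul_right _ _ _))
    1
    (fun f g => by
      rw [one_mul, LinearMap.mk₂_apply, ← norm_conjL2 μ f]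
      exact norm_inner_le_norm _ _)

lemma pairL2_apply (μ : Measure α) (f g : Lp ℂ 2 μ) :
    pairL2 μ f g = ∫ x, f x * g x ∂μ := by
  have : pairL2 μ f g = inner (𝕜 := ℂ) (conjL2 μ f) g := rfl
  rw [this, L2.inner_def]
  refine integral_congr_ae ?_
  filter_upwards [conjL2_coeFn μ f] with x hx
  rw [RCLike.inner_apply, hx, starRingEnd_apply, star_star, mul_comm]

end ConjPair

set_option linter.unusedSectionVars false

open scoped ENNReal NNReal

section Inc

variable {α : Type*} [TopologicalSpace α] [MeasurableSpace α] [OpensMeasurableSpace α]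
  [SecondCountableTopology α]

open Classical in
noncomputable def extFun (K : Set α) (f : C(K, ℂ)) : α → ℂ :=
  fun y => if h : y ∈ K then f ⟨y, h⟩ else 0

lemma extFun_add (K : Set α) (f g : C(K, ℂ)) :
    extFun K (f + g) = extFun K f + extFun K g := by
  funext y
  by_cases h : y ∈ K <;> simp [extFun, h]

lemma extFun_smul (K : Set α) (c : ℂ) (f : C(K, ℂ)) :
    extFun K (c • f) = c • extFun K f := by
  funext y
  by_cases h : y ∈ K <;> simp [extFun, h]

lemma extFun_memℒp (K : Set α) (hKc : IsClosed K) [CompactSpace K]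
    (μ : Measure α) [IsFiniteMeasure μ] (hμK : μ.restrict K = μ) (f : C(K, ℂ)) :
    MemLp (extFun K f) 2 μ := by
  refine MemLp.of_bound ?_ ‖f‖ ?_
  · have hco : ContinuousOn (extFun K f) K := by
      rw [continuousOn_iff_continuous_restrict]
      have : K.domRestrict (extFun K f) = f := by
        funext y
        simp [extFun, Set.domRestrict]
      rw [this]
      exact f.continuous
    have h2 : AEStronglyMeasurable (extFun K f) (μ.restrict K) :=
      hco.aestronglyMeasurable hKc.measurableSet
    rwa [hμK] at h2
  · refine Filter.Eventually.of_forall fun y => ?_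
    by_cases h : y ∈ K
    · simpa [extFun, h] using f.norm_coe_le_norm ⟨y, h⟩
    · simp [extFun, h, norm_nonneg]

noncomputable def incL2 (K : Set α) (hKc : IsClosed K) [CompactSpace K]
    (μ : Measure α) [IsFiniteMeasure μ] (hμK : μ.restrict K = μ) :
    C(K, ℂ) →L[ℂ] Lp ℂ 2 μ :=
  LinearMap.mkContinuous
    { toFun := fun f => (extFun_memℒp K hKc μ hμK f).toLp (extFun K f)
      map_add' := fun f g => by
        apply Lp.ext
        filter_upwards [MemLp.coeFn_toLp (extFun_memℒp K hKc μ hμK (f + g)),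
          MemLp.coeFn_toLp (extFun_memℒp K hKc μ hμK f),
          MemLp.coeFn_toLp (extFun_memℒp K hKc μ hμK g),
          Lp.coeFn_add ((extFun_memℒp K hKc μ hμK f).toLp (extFun K f))
            ((extFun_memℒp K hKc μ hμK g).toLp (extFun K g))] with y h1 h2 h3 h4
        rw [h1, h4, Pi.add_apply, h2, h3, extFun_add, Pi.add_apply]
      map_smul' := fun c f => by
        apply Lp.ext
        filter_upwards [MemLp.coeFn_toLp (extFun_memℒp K hKc μ hμK (c • f)),
          MemLp.coeFn_toLp (extFun_memℒp K hKc μ hμK f),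
          Lp.coeFn_smul c ((extFun_memℒp K hKc μ hμK f).toLp (extFun K f))] with y h1 h2 h3
        rw [h1, RingHom.id_apply, h3, Pi.smul_apply, h2, extFun_smul, Pi.smul_apply] }
    ((measureUnivNNReal μ ^ (2 : ℝ≥0∞).toReal⁻¹ : ℝ≥0) : ℝ)
    (fun f => by
      have hb : ∀ᵐ y ∂μ, ‖((extFun_memℒp K hKc μ hμK f).toLp (extFun K f) : α → ℂ) y‖ ≤ ‖f‖ := by
        filter_upwards [MemLp.coeFn_toLp (extFun_memℒp K hKc μ hμK f)] with y hy
        rw [hy]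
        by_cases h : y ∈ K
        · simpa [extFun, h] using f.norm_coe_le_norm ⟨y, h⟩
        · simp [extFun, h, norm_nonneg]
      exact Lp.norm_le_of_ae_bound (norm_nonneg f) hb)

lemma incL2_coeFn (K : Set α) (hKc : IsClosed K) [CompactSpace K]
    (μ : Measure α) [IsFiniteMeasure μ] (hμK : μ.restrict K = μ) (f : C(K, ℂ)) :
    incL2 K hKc μ hμK f =ᵐ[μ] extFun K f := by
  have : incL2 K hKc μ hμK f = (extFun_memℒp K hKc μ hμK f).toLp (extFun K f) := rfl
  rw [this]
  exact MemLp.coeFn_toLp _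

end Inc

section Coord

variable {d : ℕ} (K : Set (EuclideanSpace ℝ (Fin d))) [CompactSpace K]

noncomputable def coordCM (l : Fin d) : C(K, ℂ) :=
  ⟨fun y => ((y : EuclideanSpace ℝ (Fin d)) l : ℂ),
    Complex.continuous_ofReal.comp
      (((EuclideanSpace.proj (𝕜 := ℝ) l).continuous).comp continuous_subtype_val)⟩

noncomputable def MCLM : (Fin d → ℂ) →L[ℂ] C(K, ℂ) :=
  ∑ l, (ContinuousLinearMap.proj (R := ℂ) (φ := fun _ : Fin d => ℂ) l).smulRight (coordCM K l)

lemma MCLM_apply (z : Fin d → ℂ) (y : K) :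
    MCLM K z y = ∑ l, z l * ((y : EuclideanSpace ℝ (Fin d)) l : ℂ) := by
  simp [MCLM, ContinuousLinearMap.sum_apply, ContinuousLinearMap.smulRight_apply,
    ContinuousLinearMap.proj_apply, coordCM, smul_eq_mul]

end Coord

set_option maxHeartbeats 1600000 in
theorem aux_main (d : ℕ) (K : Set (EuclideanSpace ℝ (Fin d))) [CompactSpace K]
    (hKc : IsClosed K)
    (μ : Measure (EuclideanSpace ℝ (Fin d))) [IsFiniteMeasure μ]
    (hμK : μ.restrict K = μ) (hmem : ∀ᵐ y ∂μ, y ∈ K)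
    (k : ℝ)
    (T : Lp ℂ 2 μ →L[ℂ] Lp ℂ 2 μ)
    (E : (Fin d → ℂ) → Lp ℂ 2 μ)
    (hE : ∀ w : Fin d → ℂ, (E w : EuclideanSpace ℝ (Fin d) → ℂ)
      =ᵐ[μ] fun y => Complex.exp (Complex.I * k * ∑ l, w l * (y l : ℂ))) :
    AnalyticOn ℂ (fun p : (Fin d → ℂ) × (Fin d → ℂ) =>
      ∫ y : EuclideanSpace ℝ (Fin d),
        Complex.exp (-(Complex.I * k * ∑ l, p.1 l * (y l : ℂ))) * (T (E p.2)) y ∂μ)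
      Set.univ := by
  classical
  set ι := incL2 K hKc μ hμK with hιdef
  set M := MCLM (d := d) K with hMdef
  have key : ∀ (c : ℂ) (z : Fin d → ℂ),
      (ι (NormedSpace.exp (c • M z)) : EuclideanSpace ℝ (Fin d) → ℂ)
        =ᵐ[μ] fun y => Complex.exp (c * ∑ l, z l * (y l : ℂ)) := by
    intro c z
    filter_upwards [incL2_coeFn K hKc μ hμK (NormedSpace.exp (c • M z)), hmem] with y h1 hyK
    rw [h1]
    simp only [extFun]
    rw [dif_pos hyK, NormedSpace.exp_continuousMap_eq]
    simp only [ContinuousMap.coe_mk, Function.comp_apply]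
    rw [← Complex.exp_eq_exp_ℂ]
    congr 1
    rw [ContinuousMap.smul_apply, MCLM_apply, smul_eq_mul]
  have hE' : ∀ w, E w = ι (NormedSpace.exp ((Complex.I * (k : ℂ)) • M w)) := fun w =>
    Lp.ext ((hE w).trans (key (Complex.I * (k : ℂ)) w).symm)
  have hfun : (fun p : (Fin d → ℂ) × (Fin d → ℂ) =>
      ∫ y : EuclideanSpace ℝ (Fin d),
        Complex.exp (-(Complex.I * k * ∑ l, p.1 l * (y l : ℂ))) * (T (E p.2)) y ∂μ)
      = fun p => pairL2 μ (ι (NormedSpace.exp ((-(Complex.I * (k : ℂ))) • M p.1)))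
          (T (E p.2)) := by
    funext p
    rw [pairL2_apply]
    refine integral_congr_ae ?_
    filter_upwards [key (-(Complex.I * (k : ℂ))) p.1] with y hy
    rw [hy, neg_mul]
  rw [hfun]
  apply AnalyticOnNhd.analyticOn
  intro p _
  have h1 : AnalyticAt ℂ (fun p : (Fin d → ℂ) × (Fin d → ℂ) =>
      ι (NormedSpace.exp ((-(Complex.I * (k : ℂ))) • M p.1))) p := by
    have hm : AnalyticAt ℂ (fun z : Fin d → ℂ => (-(Complex.I * (k : ℂ))) • M z) p.1 :=
      ((-(Complex.I * (k : ℂ))) • M).analyticAt p.1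
    exact (ι.analyticAt _).comp ((NormedSpace.exp_analytic _).comp (hm.comp analyticAt_fst))
  have h2 : AnalyticAt ℂ (fun p : (Fin d → ℂ) × (Fin d → ℂ) => T (E p.2)) p := by
    have heq : (fun p : (Fin d → ℂ) × (Fin d → ℂ) => T (E p.2))
        = fun p => T (ι (NormedSpace.exp ((Complex.I * (k : ℂ)) • M p.2))) := by
      funext p; rw [hE']
    rw [heq]
    have hm : AnalyticAt ℂ (fun z : Fin d → ℂ => (Complex.I * (k : ℂ)) • M z) p.2 :=
      ((Complex.I * (k : ℂ)) • M).analyticAt p.2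
    exact (T.analyticAt _).comp ((ι.analyticAt _).comp
      ((NormedSpace.exp_analytic _).comp (hm.comp analyticAt_snd)))
  have hb := (pairL2 μ).analyticAt_bilinear
    (ι (NormedSpace.exp ((-(Complex.I * (k : ℂ))) • M p.1)), T (E p.2))
  have hc := AnalyticAt.comp (x := p) hb (h1.prod h2)
  exact hc

set_option maxHeartbeats 1600000 in
/-- Let `B ⊂ ℝ^d` be bounded measurable, `k > 0`, and
`T : L²(B;ℂ) → L²(B;ℂ)` a bounded linear operator. Then
`H(z,w) = ∫_B exp(−ik z·y) (T(exp(ik w··)))(y) dy` is jointly holomorphic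
(`ℂ`-analytic) on `ℂ^d × ℂ^d`. -/
theorem stmt11 (d : ℕ) (hd : 1 ≤ d)
    (B : Set (EuclideanSpace ℝ (Fin d))) (hBmeas : MeasurableSet B)
    (hBbdd : Bornology.IsBounded B)
    (k : ℝ) (hk : 0 < k)
    (T : Lp ℂ 2 ((volume : Measure (EuclideanSpace ℝ (Fin d))).restrict B)
      →L[ℂ] Lp ℂ 2 ((volume : Measure (EuclideanSpace ℝ (Fin d))).restrict B))
    (E : (Fin d → ℂ) → Lp ℂ 2 ((volume : Measure (EuclideanSpace ℝ (Fin d))).restrict B))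
    (hE : ∀ w : Fin d → ℂ, (E w : EuclideanSpace ℝ (Fin d) → ℂ)
      =ᵐ[(volume : Measure (EuclideanSpace ℝ (Fin d))).restrict B]
      fun y => Complex.exp (Complex.I * k * ∑ l, w l * (y l : ℂ))) :
    AnalyticOn ℂ (fun p : (Fin d → ℂ) × (Fin d → ℂ) =>
      ∫ y : EuclideanSpace ℝ (Fin d),
        Complex.exp (-(Complex.I * k * ∑ l, p.1 l * (y l : ℂ))) * (T (E p.2)) y
        ∂((volume : Measure (EuclideanSpace ℝ (Fin d))).restrict B)) Set.univ := by
  obtain ⟨R, hRsub⟩ := hBbdd.subset_closedBall 0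
  haveI : CompactSpace (Metric.closedBall (0 : EuclideanSpace ℝ (Fin d)) R) :=
    isCompact_iff_compactSpace.mp (isCompact_closedBall 0 R)
  haveI : IsFiniteMeasure ((volume : Measure (EuclideanSpace ℝ (Fin d))).restrict B) := ⟨by
    rw [Measure.restrict_apply_univ]
    exact hBbdd.measure_lt_top⟩
  refine aux_main d (Metric.closedBall 0 R) Metric.isClosed_closedBall _ ?_ ?_ k T E hE
  · rw [Measure.restrict_restrict Metric.isClosed_closedBall.measurableSet,
      Set.inter_eq_self_of_subset_right hRsub]
  · filter_upwards [ae_restrict_mem hBmeas] with y hy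
    exact hRsub hy
end

section
/- Let d ≥ 1 be an integer, let B ⊂ ℝ^d be a bounded Lebesgue-measurable set, let k > 0, and let T : L²(B;ℂ) → L²(B;ℂ) be a bounded linear operator. Then the function u : ℝ^d × ℝ^d → ℂ defined by u(x,θ) = ∫_B e^{−i k x·y} · (T(y' ↦ e^{i k θ·y'}))(y) dy is jointly real analytic on ℝ^d × ℝ^d. (In the application, u restricted to S^{d−1} × S^{d−1} equals c_d^{−1} times the far field pattern u_∞(x̂;θ), so this yields the joint real analyticity of far field patterns.) -/
open MeasureTheory Bornology NormedSpace
open scoped ENNReal NNReal ComplexConjugate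

namespace Stmt12Aux

variable {d : ℕ}

/-- Extension by zero of a continuous function on `closure B`. -/
noncomputable def extFun (B : Set (EuclideanSpace ℝ (Fin d)))
    (f : C(closure B, ℂ)) : EuclideanSpace ℝ (Fin d) → ℂ :=
  Function.extend (Subtype.val : closure B → EuclideanSpace ℝ (Fin d)) f 0

lemma extFun_apply_mem (B : Set (EuclideanSpace ℝ (Fin d))) (f : C(closure B, ℂ))
    {y : EuclideanSpace ℝ (Fin d)} (h : y ∈ closure B) :
    extFun B f y = f ⟨y, h⟩ := by
  have := Subtype.val_injective.extend_apply f (0 : EuclideanSpace ℝ (Fin d) → ℂ)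
    (⟨y, h⟩ : closure B)
  simpa [extFun] using this

lemma extFun_apply_not_mem (B : Set (EuclideanSpace ℝ (Fin d))) (f : C(closure B, ℂ))
    {y : EuclideanSpace ℝ (Fin d)} (h : y ∉ closure B) :
    extFun B f y = 0 := by
  rw [extFun, Function.extend_apply']
  · rfl
  · rintro ⟨a, rfl⟩; exact h a.2

lemma extFun_norm_le (B : Set (EuclideanSpace ℝ (Fin d)))
    [CompactSpace (closure B)]
    (f : C(closure B, ℂ)) (y : EuclideanSpace ℝ (Fin d)) :
    ‖extFun B f y‖ ≤ ‖f‖ := by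
  by_cases h : y ∈ closure B
  · rw [extFun_apply_mem B f h]
    exact f.norm_coe_le_norm ⟨y, h⟩
  · rw [extFun_apply_not_mem B f h]
    simpa using norm_nonneg f

lemma extFun_continuousOn (B : Set (EuclideanSpace ℝ (Fin d))) (f : C(closure B, ℂ)) :
    ContinuousOn (extFun B f) (closure B) := by
  rw [continuousOn_iff_continuous_restrict]
  have : (closure B).domRestrict (extFun B f) = f := by
    funext y
    rw [Set.restrict_apply, extFun_apply_mem B f y.2]
  rw [this]
  exact f.continuous

lemma finiteB (B : Set (EuclideanSpace ℝ (Fin d))) (hBbdd : IsBounded B) :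
    IsFiniteMeasure ((volume : Measure (EuclideanSpace ℝ (Fin d))).restrict B) := by
  constructor
  rw [Measure.restrict_apply_univ]
  exact hBbdd.measure_lt_top

lemma extFun_memℒp (B : Set (EuclideanSpace ℝ (Fin d))) (hBmeas : MeasurableSet B)
    (hBbdd : IsBounded B) [CompactSpace (closure B)] (f : C(closure B, ℂ)) :
    MemLp (extFun B f) 2 ((volume : Measure (EuclideanSpace ℝ (Fin d))).restrict B) := by
  haveI := finiteB B hBbdd
  refine MemLp.of_bound ?_ ‖f‖ ?_
  · exact ((extFun_continuousOn B f).mono subset_closure).aestronglyMeasurable hBmeas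
  · exact ae_of_all _ (extFun_norm_le B f)

noncomputable def psiLin (B : Set (EuclideanSpace ℝ (Fin d))) (hBmeas : MeasurableSet B)
    (hBbdd : IsBounded B) [CompactSpace (closure B)] :
    C(closure B, ℂ) →ₗ[ℝ]
      Lp ℂ 2 ((volume : Measure (EuclideanSpace ℝ (Fin d))).restrict B) where
  toFun f := (extFun_memℒp B hBmeas hBbdd f).toLp (extFun B f)
  map_add' f g := by
    have h : extFun B (f + g) =ᵐ[(volume : Measure (EuclideanSpace ℝ (Fin d))).restrict B]
        extFun B f + extFun B g := by
      refine ae_of_all _ fun y => ?_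
      by_cases h : y ∈ closure B
      · simp [extFun_apply_mem B _ h, Pi.add_apply]
      · simp [Pi.add_apply, extFun_apply_not_mem B _ h]
    exact (MemLp.toLp_congr _ ((extFun_memℒp B hBmeas hBbdd f).add
      (extFun_memℒp B hBmeas hBbdd g)) h).trans (MemLp.toLp_add _ _)
  map_smul' r f := by
    have h : extFun B (r • f) =ᵐ[(volume : Measure (EuclideanSpace ℝ (Fin d))).restrict B]
        r • extFun B f := by
      refine ae_of_all _ fun y => ?_
      by_cases h : y ∈ closure B
      · simp [extFun_apply_mem B _ h, Pi.smul_apply]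
      · simp [Pi.smul_apply, extFun_apply_not_mem B _ h]
    simp only [RingHom.id_apply]
    refine (MemLp.toLp_congr (extFun_memℒp B hBmeas hBbdd (r • f))
      ((extFun_memℒp B hBmeas hBbdd f).const_smul r) h).trans
      (MemLp.toLp_const_smul r _)

noncomputable def psi (B : Set (EuclideanSpace ℝ (Fin d))) (hBmeas : MeasurableSet B)
    (hBbdd : IsBounded B) [CompactSpace (closure B)] :
    C(closure B, ℂ) →L[ℝ]
      Lp ℂ 2 ((volume : Measure (EuclideanSpace ℝ (Fin d))).restrict B) :=
  LinearMap.mkContinuous (psiLin B hBmeas hBbdd)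
    ((measureUnivNNReal ((volume : Measure (EuclideanSpace ℝ (Fin d))).restrict B) : ℝ)
      ^ ((2 : ℝ≥0∞).toReal)⁻¹)
    (by
      intro f
      haveI := finiteB B hBbdd
      refine Lp.norm_le_of_ae_bound (norm_nonneg f) ?_
      filter_upwards [MemLp.coeFn_toLp (extFun_memℒp B hBmeas hBbdd f)] with y hy
      rw [show ((psiLin B hBmeas hBbdd f :
        Lp ℂ 2 ((volume : Measure (EuclideanSpace ℝ (Fin d))).restrict B)) :
        EuclideanSpace ℝ (Fin d) → ℂ) y = _ from hy]
      exact extFun_norm_le B f y)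

lemma psi_coeFn (B : Set (EuclideanSpace ℝ (Fin d))) (hBmeas : MeasurableSet B)
    (hBbdd : IsBounded B) [CompactSpace (closure B)] (f : C(closure B, ℂ)) :
    (psi B hBmeas hBbdd f : EuclideanSpace ℝ (Fin d) → ℂ)
      =ᵐ[(volume : Measure (EuclideanSpace ℝ (Fin d))).restrict B] extFun B f := by
  have : psi B hBmeas hBbdd f = (extFun_memℒp B hBmeas hBbdd f).toLp (extFun B f) := rfl
  rw [this]
  exact MemLp.coeFn_toLp _

noncomputable def linMap (B : Set (EuclideanSpace ℝ (Fin d))) (k : ℝ)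
    [CompactSpace (closure B)] :
    EuclideanSpace ℝ (Fin d) →L[ℝ] C(closure B, ℂ) :=
  LinearMap.toContinuousLinearMap
  { toFun := fun x =>
      ⟨fun y => Complex.I * k * ((∑ l, x l * (y : EuclideanSpace ℝ (Fin d)) l : ℝ) : ℂ),
        continuous_const.mul (Complex.continuous_ofReal.comp
          (continuous_finset_sum _ fun l _ => continuous_const.mul
            ((continuous_apply l).comp (Continuous.comp (PiLp.continuous_ofLp 2 _) continuous_subtype_val))))⟩
    map_add' := fun x x' => by
      ext y
      simp only [ContinuousMap.coe_mk, ContinuousMap.add_apply, PiLp.add_apply, add_mul,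
        Finset.sum_add_distrib, Complex.ofReal_add]
      ring
    map_smul' := fun r x => by
      ext y
      simp only [ContinuousMap.coe_mk, ContinuousMap.smul_apply, PiLp.smul_apply, smul_eq_mul,
        RingHom.id_apply, Complex.real_smul, mul_assoc, ← Finset.mul_sum, Complex.ofReal_mul]
      ring }

lemma linMap_apply (B : Set (EuclideanSpace ℝ (Fin d))) (k : ℝ)
    [CompactSpace (closure B)] (x : EuclideanSpace ℝ (Fin d)) (y : closure B) :
    linMap B k x y
      = Complex.I * k * ((∑ l, x l * (y : EuclideanSpace ℝ (Fin d)) l : ℝ) : ℂ) := rfl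

section Bil

variable {α : Type*} [MeasurableSpace α] {μ : Measure α}

lemma coe_smul_eq (r : ℝ) (f : Lp ℂ 2 μ) : (r : ℂ) • f = r • f := by
  rw [show ((r : ℂ)) = r • (1 : ℂ) by simp [Complex.real_smul], smul_assoc, one_smul]

noncomputable def bil (T : Lp ℂ 2 μ →L[ℂ] Lp ℂ 2 μ) :
    Lp ℂ 2 μ →L[ℝ] Lp ℂ 2 μ →L[ℝ] ℂ :=
  LinearMap.mkContinuous₂
    (LinearMap.mk₂ ℝ (fun f g => (inner ℂ f (T g) : ℂ))
      (fun f f' g => inner_add_left _ _ _)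
      (fun r f g => by
        rw [← coe_smul_eq, inner_smul_left, Complex.conj_ofReal, ← Complex.real_smul])
      (fun f g g' => by rw [_root_.map_add, inner_add_right])
      (fun r f g => by
        rw [← coe_smul_eq, _root_.map_smul, inner_smul_right, ← Complex.real_smul]))
    ‖T‖
    (fun f g => by
      refine (norm_inner_le_norm (𝕜 := ℂ) f (T g)).trans ?_
      calc ‖f‖ * ‖T g‖ ≤ ‖f‖ * (‖T‖ * ‖g‖) :=
            mul_le_mul_of_nonneg_left (T.le_opNorm g) (norm_nonneg f)
        _ = ‖T‖ * ‖f‖ * ‖g‖ := by ring)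

lemma bil_apply (T : Lp ℂ 2 μ →L[ℂ] Lp ℂ 2 μ) (f g : Lp ℂ 2 μ) :
    bil T f g = (inner ℂ f (T g) : ℂ) := rfl

end Bil

end Stmt12Aux

open Stmt12Aux

/-- Let `B ⊂ ℝ^d` be bounded measurable, `k > 0`, and
`T : L²(B;ℂ) → L²(B;ℂ)` a bounded linear operator. Then
`u(x,θ) = ∫_B e^{−ik x·y} (T(e^{ik θ··}))(y) dy` is jointly real analytic on
`ℝ^d × ℝ^d`. (Restricted to `S^{d−1} × S^{d−1}` this is `c_d⁻¹` times the far field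
pattern, yielding the joint real analyticity of far field patterns.) -/
theorem stmt12 (d : ℕ) (hd : 1 ≤ d)
    (B : Set (EuclideanSpace ℝ (Fin d))) (hBmeas : MeasurableSet B)
    (hBbdd : Bornology.IsBounded B)
    (k : ℝ) (hk : 0 < k)
    (T : Lp ℂ 2 ((volume : Measure (EuclideanSpace ℝ (Fin d))).restrict B)
      →L[ℂ] Lp ℂ 2 ((volume : Measure (EuclideanSpace ℝ (Fin d))).restrict B))
    (E : EuclideanSpace ℝ (Fin d) →
      Lp ℂ 2 ((volume : Measure (EuclideanSpace ℝ (Fin d))).restrict B))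
    (hE : ∀ θ : EuclideanSpace ℝ (Fin d), (E θ : EuclideanSpace ℝ (Fin d) → ℂ)
      =ᵐ[(volume : Measure (EuclideanSpace ℝ (Fin d))).restrict B]
      fun y => Complex.exp (Complex.I * k * (∑ l, θ l * y l : ℝ))) :
    AnalyticOn ℝ (fun p : EuclideanSpace ℝ (Fin d) × EuclideanSpace ℝ (Fin d) =>
      ∫ y : EuclideanSpace ℝ (Fin d),
        Complex.exp (-(Complex.I * k * (∑ l, p.1 l * y l : ℝ))) * (T (E p.2)) y
        ∂((volume : Measure (EuclideanSpace ℝ (Fin d))).restrict B)) Set.univ := by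
  haveI : CompactSpace (closure B) := isCompact_iff_compactSpace.mp hBbdd.isCompact_closure
  set Φ : EuclideanSpace ℝ (Fin d) →
      Lp ℂ 2 ((volume : Measure (EuclideanSpace ℝ (Fin d))).restrict B) :=
    fun x => psi B hBmeas hBbdd (exp (linMap B k x)) with hΦdef
  -- E agrees with Φ
  have hEΦ : ∀ x, E x = Φ x := by
    intro x
    apply Lp.ext
    refine (hE x).trans (Filter.EventuallyEq.symm ?_)
    refine (psi_coeFn B hBmeas hBbdd _).trans ?_
    filter_upwards [ae_restrict_mem hBmeas] with y hy
    have hyK : y ∈ closure B := subset_closure hy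
    rw [extFun_apply_mem B _ hyK]
    have hcont : Continuous fun g : C(closure B, ℂ) => g (⟨y, hyK⟩ : closure B) :=
      continuous_eval_const _
    have hhom := map_exp (ContinuousMap.evalAlgHom ℂ ℂ (⟨y, hyK⟩ : closure B)) hcont
      (linMap B k x)
    simp only [ContinuousMap.evalAlgHom_apply] at hhom
    rw [hhom, linMap_apply, ← Complex.exp_eq_exp_ℂ]
  -- the function is the bilinear pairing composed with Φ × Φ
  have hfun : (fun p : EuclideanSpace ℝ (Fin d) × EuclideanSpace ℝ (Fin d) =>
      ∫ y : EuclideanSpace ℝ (Fin d),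
        Complex.exp (-(Complex.I * k * (∑ l, p.1 l * y l : ℝ))) * (T (E p.2)) y
        ∂((volume : Measure (EuclideanSpace ℝ (Fin d))).restrict B))
      = fun p => bil T (Φ p.1) (Φ p.2) := by
    funext p
    rw [← hEΦ p.1, ← hEΦ p.2, bil_apply, MeasureTheory.L2.inner_def]
    refine integral_congr_ae ?_
    filter_upwards [hE p.1] with y hy
    rw [RCLike.inner_apply, hy, ← Complex.exp_conj]
    rw [mul_comm _ (Complex.exp _)]
    congr 2
    simp only [map_mul, Complex.conj_I, Complex.conj_ofReal]
    ring
  rw [hfun]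
  intro p _
  apply AnalyticAt.analyticWithinAt
  have hΦa : ∀ x, AnalyticAt ℝ Φ x := by
    intro x
    have h1 : AnalyticAt ℝ (⇑(linMap B k)) x := (linMap B k).analyticAt x
    have h2 : AnalyticAt ℝ (exp : C(closure B, ℂ) → C(closure B, ℂ)) (linMap B k x) :=
      (analyticAt_exp_of_mem_ball (𝕂 := ℂ) (linMap B k x)
        (by rw [expSeries_radius_eq_top]; exact edist_lt_top _ _)).restrictScalars
    have h21 : AnalyticAt ℝ (fun x' => exp (linMap B k x')) x := h2.comp h1
    have h3 := (psi B hBmeas hBbdd).analyticAt (exp (linMap B k x))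
    have h4 : AnalyticAt ℝ
        (fun x' => psi B hBmeas hBbdd (exp (linMap B k x'))) x :=
      AnalyticAt.comp (g := fun a => psi B hBmeas hBbdd a)
        (f := fun x' => exp (linMap B k x')) h3 h21
    exact h4
  have hpair : AnalyticAt ℝ
      (fun q : EuclideanSpace ℝ (Fin d) × EuclideanSpace ℝ (Fin d) => (Φ q.1, Φ q.2)) p :=
    ((hΦa p.1).comp analyticAt_fst).prod ((hΦa p.2).comp analyticAt_snd)
  exact AnalyticAt.comp (f := fun q : EuclideanSpace ℝ (Fin d) × EuclideanSpace ℝ (Fin d) => (Φ q.1, Φ q.2))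
    ((bil T).analyticAt_bilinear (Φ p.1, Φ p.2)) hpair
end
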